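/- Consider a one-dimensional segment model: a Poisson point process on [0,∞) with intensity λ > 0 whose points a are left endpoints of segments [a, a+ℓ_a] with i.i.d. lengths of law Q̃ satisfying ∫₁^∞ exp(−λ∫₁^u Q̃((r,∞)) dr) du < ∞. Then almost surely the union of segments has finitely many connected components, i.e. there is a random point Y such that [Y, ∞) is entirely covered. -/

import Mathlib

open MeasureTheory Set ENNReal

noncomputable section

instance (S : Type*) : MeasurableSpace (Set S) := ⊤

/-- Poisson point process with intensity `μ`: Poisson counts and independence
over disjoint regions. -/
structure IsPoissonPP {S : Type*} [MeasurableSpace S]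
    (P : Measure (Set S)) (μ : Measure S) : Prop where
  counts : ∀ A : Set S, MeasurableSet A → μ A ≠ ⊤ → ∀ m : ℕ,
    P {ω | (ω ∩ A).Finite ∧ (ω ∩ A).ncard = m} =
      ENNReal.ofReal (Real.exp (-(μ A).toReal)) * (μ A) ^ m / (Nat.factorial m : ℝ≥0∞)
  indep : ∀ (n : ℕ) (A : Fin n → Set S), (∀ j, MeasurableSet (A j)) →
    Pairwise (Function.onFun Disjoint A) →
    ∀ Ev : Fin n → Set (Set S),
      P {ω | ∀ j, ω ∩ A j ∈ Ev j} = ∏ j, P {ω | ω ∩ A j ∈ Ev j}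

section PPAux

variable {S : Type*} [MeasurableSpace S] {P : Measure (Set S)} {μ : Measure S}

theorem SegAux.pp_empty (h : IsPoissonPP P μ) {A : Set S} (hA : MeasurableSet A)
    (hfin : μ A ≠ ⊤) :
    P {ω | ω ∩ A = ∅} = ENNReal.ofReal (Real.exp (-(μ A).toReal)) := by
  have hc := h.counts A hA hfin 0
  simp only [pow_zero, Nat.factorial_zero, Nat.cast_one, mul_one, div_one] at hc
  rw [← hc]
  congr 1
  ext ω
  simp only [mem_setOf_eq]
  constructor
  · intro h'; rw [h']; simp
  · rintro ⟨hf, h0⟩; exact (Set.ncard_eq_zero hf).mp h0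

theorem SegAux.pp_finite (h : IsPoissonPP P μ)
    {A : Set S} (hA : MeasurableSet A) (hfin : μ A ≠ ⊤) :
    P {ω | (ω ∩ A).Finite} = 1 := by
  set t := (μ A).toReal with ht
  have hμA : μ A = ENNReal.ofReal t := (ENNReal.ofReal_toReal hfin).symm
  have hdecomp : {ω : Set S | (ω ∩ A).Finite} =
      ⋃ m : ℕ, {ω | (ω ∩ A).Finite ∧ (ω ∩ A).ncard = m} := by
    ext ω; simp only [mem_setOf_eq, mem_iUnion]
    exact ⟨fun hf => ⟨(ω ∩ A).ncard, hf, rfl⟩, fun ⟨m, hf, _⟩ => hf⟩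
  have hdisj : Pairwise (Function.onFun Disjoint
      (fun m : ℕ => {ω : Set S | (ω ∩ A).Finite ∧ (ω ∩ A).ncard = m})) := by
    intro m k hmk
    simp only [Function.onFun]
    rw [Set.disjoint_left]
    rintro ω ⟨_, hm⟩ ⟨_, hk⟩
    exact hmk (hm ▸ hk ▸ rfl)
  rw [hdecomp, measure_iUnion hdisj (fun m => MeasurableSpace.measurableSet_top)]
  have key : ∀ m : ℕ, P {ω | (ω ∩ A).Finite ∧ (ω ∩ A).ncard = m} =
      ENNReal.ofReal (Real.exp (-t) * (t ^ m / m.factorial)) := by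
    intro m
    rw [h.counts A hA hfin m, hμA,
      ENNReal.toReal_ofReal (by rw [ht]; exact ENNReal.toReal_nonneg),
      ← ENNReal.ofReal_pow (by rw [ht]; exact ENNReal.toReal_nonneg),
      ← ENNReal.ofReal_natCast, mul_div_assoc, ← ENNReal.ofReal_div_of_pos (by positivity),
      ← ENNReal.ofReal_mul (Real.exp_nonneg _)]
  simp_rw [key]
  rw [← ENNReal.ofReal_tsum_of_nonneg (fun m => by positivity)
    (((Real.summable_pow_div_factorial t).mul_left _)), tsum_mul_left]
  have hexp : ∑' m : ℕ, t ^ m / (m.factorial : ℝ) = Real.exp t := by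
    rw [Real.exp_eq_exp_ℝ, NormedSpace.exp_eq_tsum_div]
  rw [hexp, ← Real.exp_add]
  simp

theorem SegAux.pp_indep_empty (h : IsPoissonPP P μ) (n : ℕ) (A : Fin n → Set S)
    (hA : ∀ j, MeasurableSet (A j)) (hdisj : Pairwise (Function.onFun Disjoint A)) :
    P {ω | ∀ j, ω ∩ A j = ∅} = ∏ j, P {ω | ω ∩ A j = ∅} := by
  have := h.indep n A hA hdisj (fun _ => {∅})
  simpa only [Set.mem_singleton_iff] using this

end PPAux

section AnalysisAux

variable {g : ℝ → ℝ}

theorem SegAux.anti_integrableOn (hg : Antitone g) (a b : ℝ) : IntegrableOn g (Ioc a b) :=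
  (AntitoneOn.integrableOn_isCompact isCompact_Icc (hg.antitoneOn _)).mono_set
    Ioc_subset_Icc_self

theorem SegAux.sum_Ioc_integral (hg : Antitone g) (a : ℝ) (n : ℕ) :
    ∑ j ∈ Finset.range n, ∫ x in Ioc (a + j) (a + j + 1), g x = ∫ x in Ioc a (a + n), g x := by
  induction n with
  | zero => simp
  | succ n ih =>
    rw [Finset.sum_range_succ, ih]
    push_cast
    rw [← MeasureTheory.setIntegral_union (Ioc_disjoint_Ioc_of_le le_rfl) measurableSet_Ioc
        (SegAux.anti_integrableOn hg _ _) (SegAux.anti_integrableOn hg _ _),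
      Set.Ioc_union_Ioc_eq_Ioc (by linarith [Nat.cast_nonneg (α := ℝ) n]) (by linarith)]
    ring_nf

theorem SegAux.Ioc_integral_mono_right (hg : Antitone g) (h0 : ∀ r, 0 ≤ g r) {a b c : ℝ}
    (hbc : b ≤ c) :
    ∫ x in Ioc a b, g x ≤ ∫ x in Ioc a c, g x :=
  setIntegral_mono_set (SegAux.anti_integrableOn hg _ _)
    (Filter.Eventually.of_forall fun x => h0 x)
    (HasSubset.Subset.eventuallyLE (Ioc_subset_Ioc_right hbc))

variable (Qt : Measure ℝ) [IsProbabilityMeasure Qt]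

theorem SegAux.Qbar_anti : Antitone (fun r => (Qt (Ioi r)).toReal) := fun a b hab =>
  ENNReal.toReal_mono (measure_ne_top _ _) (measure_mono (Ioi_subset_Ioi hab))

theorem SegAux.Qbar_le_one : ∀ r, (Qt (Ioi r)).toReal ≤ 1 := fun _ =>
  ENNReal.toReal_le_of_le_ofReal zero_le_one (by simpa using prob_le_one)

theorem SegAux.Qbar_piece_le (j : ℕ) :
    ∫ r in Ioc ((2:ℝ) + j) (2 + j + 1), (Qt (Ioi r)).toReal ≤
      (Qt (Ici ((j:ℝ) + 2))).toReal := by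
  have h1 : ∫ r in Ioc ((2:ℝ) + j) (2 + j + 1), (Qt (Ioi r)).toReal ≤
      ∫ _ in Ioc ((2:ℝ) + j) (2 + j + 1), (Qt (Ici ((j:ℝ) + 2))).toReal := by
    apply setIntegral_mono_on (SegAux.anti_integrableOn (SegAux.Qbar_anti Qt) _ _)
      ((integrableOn_const_iff).mpr (Or.inr (by simp)))
      measurableSet_Ioc
    intro x hx
    apply ENNReal.toReal_mono (measure_ne_top _ _)
    apply measure_mono
    intro y hy
    simp only [mem_Ioi] at hy
    have : (j:ℝ) + 2 ≤ x := by linarith [hx.1]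
    exact le_of_lt (lt_of_le_of_lt this hy)
  calc _ ≤ _ := h1
    _ ≤ _ := by
        rw [setIntegral_const, Real.volume_real_Ioc]
        simp [ENNReal.toReal_ofReal]

theorem SegAux.int_1_le (n : ℕ) :
    ∫ r in Ioc (1:ℝ) ((n:ℝ) + 2), (Qt (Ioi r)).toReal ≤
      1 + ∑ j ∈ Finset.range n, (Qt (Ici ((j:ℝ) + 2))).toReal := by
  have hsplit : ∫ r in Ioc (1:ℝ) ((n:ℝ) + 2), (Qt (Ioi r)).toReal =
      (∫ r in Ioc (1:ℝ) 2, (Qt (Ioi r)).toReal) +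
      ∫ r in Ioc (2:ℝ) ((n:ℝ) + 2), (Qt (Ioi r)).toReal := by
    rw [← MeasureTheory.setIntegral_union (Ioc_disjoint_Ioc_of_le le_rfl) measurableSet_Ioc
        (SegAux.anti_integrableOn (SegAux.Qbar_anti Qt) _ _)
        (SegAux.anti_integrableOn (SegAux.Qbar_anti Qt) _ _),
      Set.Ioc_union_Ioc_eq_Ioc (by norm_num) (by linarith [Nat.cast_nonneg (α := ℝ) n])]
  rw [hsplit]
  have h12 : ∫ r in Ioc (1:ℝ) 2, (Qt (Ioi r)).toReal ≤ 1 := by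
    calc ∫ r in Ioc (1:ℝ) 2, (Qt (Ioi r)).toReal
        ≤ ∫ _ in Ioc (1:ℝ) 2, (1:ℝ) := by
          apply setIntegral_mono_on (SegAux.anti_integrableOn (SegAux.Qbar_anti Qt) _ _)
            ((integrableOn_const_iff).mpr (Or.inr (by simp))) measurableSet_Ioc
          exact fun x _ => SegAux.Qbar_le_one Qt x
      _ = 1 := by rw [setIntegral_const, Real.volume_real_Ioc]; norm_num
  have hsum : ∫ r in Ioc (2:ℝ) (2 + (n:ℝ)), (Qt (Ioi r)).toReal ≤
      ∑ j ∈ Finset.range n, (Qt (Ici ((j:ℝ) + 2))).toReal := by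
    rw [← SegAux.sum_Ioc_integral (SegAux.Qbar_anti Qt) 2 n]
    exact Finset.sum_le_sum (fun j _ => SegAux.Qbar_piece_le Qt j)
  have h2n : (2:ℝ) + n = (n:ℝ) + 2 := by ring
  rw [h2n] at hsum
  linarith

end AnalysisAux

section FAux

theorem SegAux.f_le_integral {f : ℝ → ℝ}
    (hmono : ∀ x n : ℝ, 1 ≤ x → x ≤ n → f n ≤ f x)
    (hint : IntegrableOn f (Ici 1)) (n : ℕ) :
    f ((n:ℝ) + 2) ≤ ∫ u in Ioc ((n:ℝ) + 1) ((n:ℝ) + 2), f u := by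
  have hsub : Ioc ((n:ℝ) + 1) ((n:ℝ) + 2) ⊆ Ici 1 := fun x hx => by
    simp only [mem_Ioc, mem_Ici] at *
    linarith [Nat.cast_nonneg (α := ℝ) n, hx.1]
  calc f ((n:ℝ) + 2) = ∫ _ in Ioc ((n:ℝ) + 1) ((n:ℝ) + 2), f ((n:ℝ) + 2) := by
        rw [setIntegral_const, Real.volume_real_Ioc]
        norm_num
    _ ≤ ∫ u in Ioc ((n:ℝ) + 1) ((n:ℝ) + 2), f u := by
        apply setIntegral_mono_on ((integrableOn_const_iff).mpr (Or.inr (by simp)))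
          (hint.mono_set hsub) measurableSet_Ioc
        intro x hx
        exact hmono x _ (by linarith [Nat.cast_nonneg (α := ℝ) n, hx.1]) hx.2

theorem SegAux.tsum_pieces_le {f : ℝ → ℝ} (hf0 : ∀ u, 0 ≤ f u)
    (hint : IntegrableOn f (Ici 1)) :
    ∑' n : ℕ, ENNReal.ofReal (∫ u in Ioc ((n:ℝ) + 1) ((n:ℝ) + 2), f u) ≤
      ENNReal.ofReal (∫ u in Ici (1:ℝ), f u) := by
  have hsub : ∀ n : ℕ, Ioc ((n:ℝ) + 1) ((n:ℝ) + 2) ⊆ Ici 1 := fun n x hx => by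
    simp only [mem_Ioc, mem_Ici] at *
    linarith [Nat.cast_nonneg (α := ℝ) n, hx.1]
  have heq : ∀ n : ℕ, ENNReal.ofReal (∫ u in Ioc ((n:ℝ) + 1) ((n:ℝ) + 2), f u) =
      ∫⁻ u in Ioc ((n:ℝ) + 1) ((n:ℝ) + 2), ENNReal.ofReal (f u) := fun n =>
    ofReal_integral_eq_lintegral_ofReal (hint.mono_set (hsub n))
      (Filter.Eventually.of_forall hf0)
  simp_rw [heq]
  have hdisj : Pairwise (Function.onFun Disjoint
      (fun n : ℕ => Ioc ((n:ℝ) + 1) ((n:ℝ) + 2))) := by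
    intro m n hmn
    simp only [Function.onFun]
    rw [Set.Ioc_disjoint_Ioc]
    rcases hmn.lt_or_gt with h | h
    · have : (m:ℝ) + 2 ≤ (n:ℝ) + 1 := by
        have : (m:ℝ) + 1 ≤ (n:ℝ) := by exact_mod_cast by omega
        linarith
      exact le_trans (min_le_left _ _) (le_trans this (le_max_right _ _))
    · have : (n:ℝ) + 2 ≤ (m:ℝ) + 1 := by
        have : (n:ℝ) + 1 ≤ (m:ℝ) := by exact_mod_cast by omega
        linarith
      exact le_trans (min_le_right _ _) (le_trans this (le_max_left _ _))
  rw [← MeasureTheory.lintegral_iUnion (fun n => measurableSet_Ioc) hdisj]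
  rw [ofReal_integral_eq_lintegral_ofReal hint (Filter.Eventually.of_forall hf0)]
  exact lintegral_mono_set (iUnion_subset hsub)

end FAux

section TopAux

theorem SegAux.cc_eq {C s : Set ℝ} (hs : IsPreconnected s) (hsC : s ⊆ C) {x y : ℝ}
    (hx : x ∈ s) (hy : y ∈ s) :
    connectedComponentIn C x = connectedComponentIn C y :=
  connectedComponentIn_eq (hs.subset_connectedComponentIn hx hsC hy)

theorem SegAux.components_finite {C : Set ℝ} {F : Set (ℝ × ℝ)} (hF : F.Finite) (N : ℝ)
    (hN : Ici N ⊆ C) (hFC : ∀ p ∈ F, Icc p.1 (p.1 + p.2) ⊆ C) (hF2 : ∀ p ∈ F, 0 ≤ p.2)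
    (hcover : ∀ x ∈ C, (∃ p ∈ F, x ∈ Icc p.1 (p.1 + p.2)) ∨ N ≤ x) :
    {D : Set ℝ | ∃ x ∈ C, D = connectedComponentIn C x}.Finite := by
  apply Set.Finite.subset (Set.Finite.insert (connectedComponentIn C N)
    (hF.image (fun p => connectedComponentIn C p.1)))
  rintro D ⟨x, hx, rfl⟩
  rcases hcover x hx with ⟨p, hp, hxp⟩ | hxN
  · refine Set.mem_insert_iff.mpr (Or.inr ⟨p, hp, ?_⟩)
    exact SegAux.cc_eq isPreconnected_Icc (hFC p hp) ⟨le_rfl, by linarith [hF2 p hp]⟩ hxp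
  · refine Set.mem_insert_iff.mpr (Or.inl ?_)
    exact SegAux.cc_eq isPreconnected_Ici hN (mem_Ici.mpr hxN) self_mem_Ici

end TopAux

/-- in the one-dimensional Poisson segment model on `[0,∞)` with
intensity `λ` and i.i.d. segment lengths of law `Q̃` satisfying the
Fitzsimmons–Fristedt–Shepp type condition
`∫₁^∞ exp(−λ∫₁^u Q̃((r,∞)) dr) du < ∞`, almost surely the union of segments has
finitely many connected components; in particular some half line `[Y,∞)` is
entirely covered. -/
theorem segment_model_finite_components (lam : ℝ) (hlam : 0 < lam)
    (Qt : Measure ℝ) [IsProbabilityMeasure Qt] (hQsupp : Qt (Set.Iio 0) = 0)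
    (P : Measure (Set (ℝ × ℝ))) [IsProbabilityMeasure P]
    (hPP : IsPoissonPP P (ENNReal.ofReal lam •
      (((volume : Measure ℝ).restrict (Set.Ici 0)).prod Qt)))
    (hint : IntegrableOn
      (fun u => Real.exp (-(lam * ∫ r in Set.Ioc (1:ℝ) u, (Qt (Set.Ioi r)).toReal)))
      (Set.Ici (1:ℝ))) :
    ∀ᵐ ζ ∂P,
      (∃ Y : ℝ, Set.Ici Y ⊆ ⋃ p ∈ ζ, Set.Icc p.1 (p.1 + p.2)) ∧
      {C : Set ℝ | ∃ x ∈ ⋃ p ∈ ζ, Set.Icc p.1 (p.1 + p.2),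
        C = connectedComponentIn (⋃ p ∈ ζ, Set.Icc p.1 (p.1 + p.2)) x}.Finite := by
  classical
  set μ : Measure (ℝ × ℝ) := ENNReal.ofReal lam •
    (((volume : Measure ℝ).restrict (Set.Ici 0)).prod Qt) with hμ
  set f : ℝ → ℝ :=
    fun u => Real.exp (-(lam * ∫ r in Set.Ioc (1:ℝ) u, (Qt (Set.Ioi r)).toReal)) with hf
  have hf0 : ∀ u, 0 ≤ f u := fun u => (Real.exp_pos _).le
  have hfint : IntegrableOn f (Set.Ici (1:ℝ)) := hint
  have hfmono : ∀ x y : ℝ, 1 ≤ x → x ≤ y → f y ≤ f x := by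
    intro x y h1 hxy
    simp only [hf]
    apply Real.exp_le_exp.mpr
    apply neg_le_neg
    exact mul_le_mul_of_nonneg_left (SegAux.Ioc_integral_mono_right (SegAux.Qbar_anti Qt)
      (fun r => ENNReal.toReal_nonneg) hxy) hlam.le
  set s : ℕ → Set (Set (ℝ × ℝ)) := fun n =>
    {ω | ¬ Set.Icc (n:ℝ) ((n:ℝ) + 1) ⊆ ⋃ p ∈ ω, Set.Icc p.1 (p.1 + p.2)} with hs
  -- the per-n probability bound
  have hsn : ∀ n : ℕ, P (s n) ≤ ENNReal.ofReal (Real.exp lam) *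
      ENNReal.ofReal (∫ u in Set.Ioc ((n:ℝ) + 1) ((n:ℝ) + 2), f u) := by
    intro n
    set A : Fin n → Set (ℝ × ℝ) := fun j =>
      Set.Ico ((n:ℝ) - (j:ℕ) - 1) ((n:ℝ) - (j:ℕ)) ×ˢ Set.Ici (((j:ℕ):ℝ) + 2) with hA
    have hjle : ∀ j : Fin n, (((j:ℕ):ℝ)) ≤ (n:ℝ) - 1 := by
      intro j
      have hj := j.2
      have : (((j:ℕ):ℝ)) + 1 ≤ n := by exact_mod_cast hj
      linarith
    have hmeasA : ∀ j, MeasurableSet (A j) := fun j =>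
      measurableSet_Ico.prod measurableSet_Ici
    have hdisjA : Pairwise (Function.onFun Disjoint A) := by
      intro j k hjk
      simp only [Function.onFun, hA]
      rw [Set.disjoint_left]
      intro p hp hq'
      simp only [Set.mem_prod, Set.mem_Ico, Set.mem_Ici] at hp hq'
      rcases (Fin.val_ne_iff.mpr hjk).lt_or_gt with h | h
      · have : (((j:ℕ):ℝ)) + 1 ≤ ((k:ℕ):ℝ) := by exact_mod_cast h
        linarith [hp.1.1, hp.1.2, hq'.1.1, hq'.1.2]
      · have : (((k:ℕ):ℝ)) + 1 ≤ ((j:ℕ):ℝ) := by exact_mod_cast h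
        linarith [hp.1.1, hp.1.2, hq'.1.1, hq'.1.2]
    have hμA : ∀ j : Fin n, μ (A j) = ENNReal.ofReal lam * Qt (Set.Ici (((j:ℕ):ℝ) + 2)) := by
      intro j
      rw [hμ, hA]
      simp only [Measure.smul_apply, smul_eq_mul]
      rw [Measure.prod_prod, Measure.restrict_apply measurableSet_Ico]
      have hinter : Set.Ico ((n:ℝ) - (j:ℕ) - 1) ((n:ℝ) - (j:ℕ)) ∩ Set.Ici 0 =
          Set.Ico ((n:ℝ) - (j:ℕ) - 1) ((n:ℝ) - (j:ℕ)) := by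
        apply Set.inter_eq_left.mpr
        intro x hx
        simp only [Set.mem_Ico] at hx
        have := hjle j
        exact Set.mem_Ici.mpr (by linarith [hx.1])
      rw [hinter, Real.volume_Ico]
      have h1 : (n:ℝ) - (j:ℕ) - ((n:ℝ) - (j:ℕ) - 1) = 1 := by ring
      rw [h1]
      simp
    have hμAne : ∀ j : Fin n, μ (A j) ≠ ⊤ := by
      intro j
      rw [hμA j]
      exact ENNReal.mul_ne_top ENNReal.ofReal_ne_top (measure_ne_top _ _)
    have hPA : ∀ j : Fin n, P {ω | ω ∩ A j = ∅} =
        ENNReal.ofReal (Real.exp (-(lam * (Qt (Set.Ici (((j:ℕ):ℝ) + 2))).toReal))) := by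
      intro j
      rw [SegAux.pp_empty hPP (hmeasA j) (hμAne j), hμA j]
      rw [ENNReal.toReal_mul, ENNReal.toReal_ofReal hlam.le]
    have hsub : s n ⊆ {ω | ∀ j, ω ∩ A j = ∅} := by
      intro ω hω
      by_contra hne
      simp only [Set.mem_setOf_eq, not_forall] at hne
      obtain ⟨j, hj⟩ := hne
      obtain ⟨p, hpω, hpA⟩ := Set.nonempty_iff_ne_empty.mpr hj
      simp only [hA, Set.mem_prod, Set.mem_Ico, Set.mem_Ici] at hpA
      simp only [hs, Set.mem_setOf_eq] at hω
      apply hω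
      intro x hx
      simp only [Set.mem_Icc] at hx
      have hj0 : (0:ℝ) ≤ ((j:ℕ):ℝ) := Nat.cast_nonneg _
      have hx1 : p.1 ≤ x := by linarith [hpA.1.2, hx.1]
      have hx2 : x ≤ p.1 + p.2 := by linarith [hpA.1.1, hpA.2, hx.2]
      exact Set.mem_biUnion hpω (Set.mem_Icc.mpr ⟨hx1, hx2⟩)
    have hPs : P (s n) ≤ ENNReal.ofReal (Real.exp (-(lam *
        ∑ j ∈ Finset.range n, (Qt (Set.Ici ((j:ℝ) + 2))).toReal))) := by
      calc P (s n) ≤ P {ω | ∀ j, ω ∩ A j = ∅} := measure_mono hsub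
        _ = ∏ j, P {ω | ω ∩ A j = ∅} := SegAux.pp_indep_empty hPP n A hmeasA hdisjA
        _ = ENNReal.ofReal (Real.exp (-(lam *
            ∑ j ∈ Finset.range n, (Qt (Set.Ici ((j:ℝ) + 2))).toReal))) := by
            simp_rw [hPA]
            rw [← ENNReal.ofReal_prod_of_nonneg (fun i _ => (Real.exp_pos _).le)]
            congr 1
            rw [← Real.exp_sum]
            congr 1
            rw [← Fin.sum_univ_eq_sum_range
              (fun j => (Qt (Set.Ici ((j:ℝ) + 2))).toReal) n]
            rw [Finset.mul_sum, ← Finset.sum_neg_distrib]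
    have hreal : Real.exp (-(lam * ∑ j ∈ Finset.range n,
        (Qt (Set.Ici ((j:ℝ) + 2))).toReal)) ≤
        Real.exp lam * ∫ u in Set.Ioc ((n:ℝ) + 1) ((n:ℝ) + 2), f u := by
      have h1 : Real.exp (-(lam * ∑ j ∈ Finset.range n,
          (Qt (Set.Ici ((j:ℝ) + 2))).toReal)) ≤ Real.exp lam * f ((n:ℝ) + 2) := by
        simp only [hf]
        rw [← Real.exp_add]
        apply Real.exp_le_exp.mpr
        have h2 := SegAux.int_1_le Qt n
        have h3 := mul_le_mul_of_nonneg_left h2 hlam.le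
        linarith
      have h4 := SegAux.f_le_integral (f := f) hfmono hfint n
      calc _ ≤ _ := h1
        _ ≤ _ := mul_le_mul_of_nonneg_left h4 (Real.exp_nonneg _)
    calc P (s n) ≤ _ := hPs
      _ ≤ ENNReal.ofReal (Real.exp lam * ∫ u in Set.Ioc ((n:ℝ) + 1) ((n:ℝ) + 2), f u) :=
          ENNReal.ofReal_le_ofReal hreal
      _ = _ := ENNReal.ofReal_mul (Real.exp_nonneg _)
  -- Borel-Cantelli
  have hsum : (∑' n : ℕ, P (s n)) ≠ ⊤ := by
    apply ne_top_of_le_ne_top (b := ENNReal.ofReal (Real.exp lam) *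
      ENNReal.ofReal (∫ u in Set.Ici (1:ℝ), f u))
    · exact ENNReal.mul_ne_top ENNReal.ofReal_ne_top ENNReal.ofReal_ne_top
    · calc (∑' n : ℕ, P (s n)) ≤ ∑' n : ℕ, ENNReal.ofReal (Real.exp lam) *
          ENNReal.ofReal (∫ u in Set.Ioc ((n:ℝ) + 1) ((n:ℝ) + 2), f u) :=
            ENNReal.tsum_le_tsum hsn
        _ = ENNReal.ofReal (Real.exp lam) * ∑' n : ℕ,
            ENNReal.ofReal (∫ u in Set.Ioc ((n:ℝ) + 1) ((n:ℝ) + 2), f u) :=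
            ENNReal.tsum_mul_left
        _ ≤ _ := mul_le_mul_right (SegAux.tsum_pieces_le hf0 hfint) _
  have hBC := MeasureTheory.ae_eventually_notMem (μ := P) hsum
  -- a.s. no points with negative coordinates
  have hA2meas : MeasurableSet ((Set.Iio (0:ℝ) ×ˢ (Set.univ : Set ℝ)) ∪
      ((Set.univ : Set ℝ) ×ˢ Set.Iio (0:ℝ))) :=
    (measurableSet_Iio.prod MeasurableSet.univ).union
      (MeasurableSet.univ.prod measurableSet_Iio)
  have hμA2 : μ ((Set.Iio (0:ℝ) ×ˢ (Set.univ : Set ℝ)) ∪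
      ((Set.univ : Set ℝ) ×ˢ Set.Iio (0:ℝ))) = 0 := by
    apply measure_union_null
    · rw [hμ]
      simp only [Measure.smul_apply, smul_eq_mul]
      rw [Measure.prod_prod, Measure.restrict_apply measurableSet_Iio]
      have hie : Set.Iio (0:ℝ) ∩ Set.Ici 0 = ∅ := by
        ext x
        simp only [Set.mem_inter_iff, Set.mem_Iio, Set.mem_Ici, Set.mem_empty_iff_false,
          iff_false, not_and, not_le]
        intro h
        exact h
      rw [hie]
      simp
    · rw [hμ]
      simp only [Measure.smul_apply, smul_eq_mul]
      rw [Measure.prod_prod, hQsupp]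
      simp
  have hprob2 : P {ω | ω ∩ ((Set.Iio (0:ℝ) ×ˢ (Set.univ : Set ℝ)) ∪
      ((Set.univ : Set ℝ) ×ˢ Set.Iio (0:ℝ))) = ∅} = 1 := by
    rw [SegAux.pp_empty hPP hA2meas (by rw [hμA2]; exact ENNReal.zero_ne_top), hμA2]
    simp
  have h2 : ∀ᵐ ζ ∂P, ζ ∩ ((Set.Iio (0:ℝ) ×ˢ (Set.univ : Set ℝ)) ∪
      ((Set.univ : Set ℝ) ×ˢ Set.Iio (0:ℝ))) = ∅ := by
    rw [MeasureTheory.ae_iff]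
    have hce : {ζ : Set (ℝ × ℝ) | ¬ ζ ∩ ((Set.Iio (0:ℝ) ×ˢ (Set.univ : Set ℝ)) ∪
        ((Set.univ : Set ℝ) ×ˢ Set.Iio (0:ℝ))) = ∅} =
        {ω : Set (ℝ × ℝ) | ω ∩ ((Set.Iio (0:ℝ) ×ˢ (Set.univ : Set ℝ)) ∪
        ((Set.univ : Set ℝ) ×ˢ Set.Iio (0:ℝ))) = ∅}ᶜ := rfl
    rw [hce, measure_compl MeasurableSpace.measurableSet_top (measure_ne_top _ _), hprob2]
    simp
  -- a.s. locally finite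
  have h3 : ∀ᵐ ζ ∂P, ∀ M : ℕ,
      (ζ ∩ (Set.Icc (0:ℝ) (M:ℝ) ×ˢ (Set.univ : Set ℝ))).Finite := by
    rw [MeasureTheory.ae_all_iff]
    intro M
    have hμM : μ (Set.Icc (0:ℝ) (M:ℝ) ×ˢ (Set.univ : Set ℝ)) ≠ ⊤ := by
      rw [hμ]
      simp only [Measure.smul_apply, smul_eq_mul]
      rw [Measure.prod_prod, Measure.restrict_apply measurableSet_Icc]
      apply ENNReal.mul_ne_top ENNReal.ofReal_ne_top
      apply ENNReal.mul_ne_top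
      · exact ne_top_of_le_ne_top (by rw [Real.volume_Icc]; exact ENNReal.ofReal_ne_top)
          (measure_mono Set.inter_subset_left)
      · exact measure_ne_top _ _
    have hpf := SegAux.pp_finite hPP (measurableSet_Icc.prod MeasurableSet.univ) hμM
    rw [MeasureTheory.ae_iff]
    have hce : {ζ : Set (ℝ × ℝ) |
        ¬ (ζ ∩ (Set.Icc (0:ℝ) (M:ℝ) ×ˢ (Set.univ : Set ℝ))).Finite} =
        {ω : Set (ℝ × ℝ) |
        (ω ∩ (Set.Icc (0:ℝ) (M:ℝ) ×ˢ (Set.univ : Set ℝ))).Finite}ᶜ := rfl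
    rw [hce, measure_compl MeasurableSpace.measurableSet_top (measure_ne_top _ _), hpf]
    simp
  -- combine
  filter_upwards [hBC, h2, h3] with ζ hζ1 hζ2 hζ3
  obtain ⟨N₀, hN₀⟩ := Filter.eventually_atTop.mp hζ1
  have hcovN : ∀ n : ℕ, n ≥ N₀ →
      Set.Icc (n:ℝ) ((n:ℝ) + 1) ⊆ ⋃ p ∈ ζ, Set.Icc p.1 (p.1 + p.2) := by
    intro n hn
    have hns := hN₀ n hn
    simp only [hs, Set.mem_setOf_eq, not_not] at hns
    exact hns
  have hIci : Set.Ici ((N₀:ℝ)) ⊆ ⋃ p ∈ ζ, Set.Icc p.1 (p.1 + p.2) := by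
    intro x hx
    rw [Set.mem_Ici] at hx
    have hx0 : (0:ℝ) ≤ x := le_trans (Nat.cast_nonneg N₀) hx
    have h1 : ((⌊x⌋₊ : ℕ):ℝ) ≤ x := Nat.floor_le hx0
    have h2 : x < ((⌊x⌋₊ : ℕ):ℝ) + 1 := Nat.lt_floor_add_one x
    have h3 : N₀ ≤ ⌊x⌋₊ := Nat.le_floor hx
    exact hcovN ⌊x⌋₊ h3 (Set.mem_Icc.mpr ⟨h1, h2.le⟩)
  refine ⟨⟨(N₀:ℝ), hIci⟩, ?_⟩
  have hpos : ∀ p ∈ ζ, 0 ≤ p.1 ∧ 0 ≤ p.2 := by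
    intro p hp
    constructor
    · by_contra hc
      push_neg at hc
      have hmem : p ∈ ζ ∩ ((Set.Iio (0:ℝ) ×ˢ (Set.univ : Set ℝ)) ∪
          ((Set.univ : Set ℝ) ×ˢ Set.Iio (0:ℝ))) :=
        ⟨hp, Or.inl ⟨hc, Set.mem_univ _⟩⟩
      rw [hζ2] at hmem
      exact hmem
    · by_contra hc
      push_neg at hc
      have hmem : p ∈ ζ ∩ ((Set.Iio (0:ℝ) ×ˢ (Set.univ : Set ℝ)) ∪
          ((Set.univ : Set ℝ) ×ˢ Set.Iio (0:ℝ))) :=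
        ⟨hp, Or.inr ⟨Set.mem_univ _, hc⟩⟩
      rw [hζ2] at hmem
      exact hmem
  apply SegAux.components_finite (hζ3 N₀) ((N₀:ℝ)) hIci
  · rintro p ⟨hp, _⟩ y hy
    exact Set.mem_biUnion hp hy
  · rintro p ⟨hp, _⟩
    exact (hpos p hp).2
  · intro x hx
    obtain ⟨p, hp, hxp⟩ := Set.mem_iUnion₂.mp hx
    by_cases hple : p.1 ≤ (N₀:ℝ)
    · exact Or.inl ⟨p, ⟨hp, ⟨(hpos p hp).1, hple⟩, Set.mem_univ _⟩, hxp⟩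
    · push_neg at hple
      exact Or.inr (le_of_lt (lt_of_lt_of_le hple hxp.1))

end
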